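/- arXiv:2507.23199 — 2 statements merged into one kernel-verified Lean document; each statement's English description precedes it below -/
import Mathlib

section
/- Let u, v : [0,∞) → ℝ^J be two solutions of the Lorenz 96 equation with ‖u(t)‖ ≤ ρ and ‖v(t)‖ ≤ ρ for all t ≥ 0, where ρ = √(2J)·|F|, let δ(t) = v(t) − u(t), and assume β > 0 is such that ‖δ(t)‖² ≤ ‖δ(0)‖²·e^{2βt} for all t ≥ 0. Then for all t ≥ 0, ‖Πδ(t)‖² ≤ a₁(t)·‖δ(0)‖² + ‖Πδ(0)‖², where a₁(t) = (16ρ²/β)·(e^{2βt} − 1). -/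
/-- The Lorenz 96 vector field on `ℝ^J` with external forcing `F`,
with coordinates indexed cyclically modulo `J`. -/
noncomputable def lorenz96 (J : ℕ) [NeZero J] (F : ℝ)
    (u : EuclideanSpace ℝ (Fin J)) : EuclideanSpace ℝ (Fin J) :=
  WithLp.toLp 2 (fun j => (u (j + 1) - u (j - 2)) * u (j - 1) - u j + F)

/-- The orthogonal projection of `ℝ^J` that keeps the coordinates whose
(1-based) index is not divisible by 3 and zeroes out every coordinate whose
(1-based) index is divisible by 3. -/
noncomputable def lorenz96Proj (J : ℕ)
    (u : EuclideanSpace ℝ (Fin J)) : EuclideanSpace ℝ (Fin J) :=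
  WithLp.toLp 2 (fun j => if ((j : ℕ) + 1) % 3 = 0 then 0 else u j)

/-- Projection as a continuous linear map. -/
noncomputable def l96P (J : ℕ) : EuclideanSpace ℝ (Fin J) →L[ℝ] EuclideanSpace ℝ (Fin J) :=
  LinearMap.toContinuousLinearMap
    { toFun := lorenz96Proj J
      map_add' := by
        intro x y; ext j
        simp only [lorenz96Proj, PiLp.add_apply, PiLp.toLp_apply]
        split <;> simp
      map_smul' := by
        intro c x; ext j
        simp only [lorenz96Proj, PiLp.toLp_apply, PiLp.smul_apply, RingHom.id_apply, smul_eq_mul]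
        split <;> simp }

lemma euclid_norm_sq {J : ℕ} (x : EuclideanSpace ℝ (Fin J)) :
    ‖x‖ ^ 2 = ∑ j, (x j) ^ 2 := by
  rw [← Real.sqrt_sq (norm_nonneg x), EuclideanSpace.norm_eq]
  rw [Real.sq_sqrt (by positivity), Real.sq_sqrt (by positivity)]
  simp [sq_abs]

lemma coord_sq_le {J : ℕ} (x : EuclideanSpace ℝ (Fin J)) (j : Fin J) :
    (x j) ^ 2 ≤ ‖x‖ ^ 2 := by
  rw [euclid_norm_sq]
  exact Finset.single_le_sum (fun i _ => sq_nonneg (x i)) (Finset.mem_univ j)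

lemma proj_norm_le {J : ℕ} (x : EuclideanSpace ℝ (Fin J)) :
    ‖lorenz96Proj J x‖ ^ 2 ≤ ‖x‖ ^ 2 := by
  rw [euclid_norm_sq, euclid_norm_sq]
  refine Finset.sum_le_sum fun j _ => ?_
  simp only [lorenz96Proj, PiLp.toLp_apply]
  split
  · simpa using sq_nonneg (x j)
  · exact le_rfl

lemma shift_sum_sq {J : ℕ} [NeZero J] (x : EuclideanSpace ℝ (Fin J)) (c : Fin J) :
    ∑ j, (x (j + c)) ^ 2 = ∑ j, (x j) ^ 2 :=
  Fintype.sum_equiv (Equiv.addRight c) _ _ (fun j => rfl)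

lemma shift_sum_sq' {J : ℕ} [NeZero J] (x : EuclideanSpace ℝ (Fin J)) (c : Fin J) :
    ∑ j, (x (j - c)) ^ 2 = ∑ j, (x j) ^ 2 :=
  Fintype.sum_equiv (Equiv.subRight c) _ _ (fun j => rfl)

/-- Key nonlinear estimate. -/
lemma key_est {J : ℕ} [NeZero J] (F ρ : ℝ) (a b : EuclideanSpace ℝ (Fin J))
    (ha : ‖a‖ ≤ ρ) (hb : ‖b‖ ≤ ρ) :
    ‖lorenz96 J F b - lorenz96 J F a + (b - a)‖ ^ 2 ≤ 16 * ρ ^ 2 * ‖b - a‖ ^ 2 := by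
  have hρ : 0 ≤ ρ := le_trans (norm_nonneg a) ha
  set δ : EuclideanSpace ℝ (Fin J) := b - a with hδ
  have hcomp : ∀ j : Fin J,
      ((lorenz96 J F b - lorenz96 J F a + δ) j) ^ 2
        ≤ 4 * ρ ^ 2 * ((δ (j + 1)) ^ 2 + (δ (j - 2)) ^ 2 + 2 * (δ (j - 1)) ^ 2) := by
    intro j
    have hb1 : (b (j - 1)) ^ 2 ≤ ρ ^ 2 :=
      le_trans (coord_sq_le b _) (by nlinarith [norm_nonneg b])
    have ha1 : (a (j + 1)) ^ 2 ≤ ρ ^ 2 :=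
      le_trans (coord_sq_le a _) (by nlinarith [norm_nonneg a])
    have ha2 : (a (j - 2)) ^ 2 ≤ ρ ^ 2 :=
      le_trans (coord_sq_le a _) (by nlinarith [norm_nonneg a])
    have hval : (lorenz96 J F b - lorenz96 J F a + δ) j
        = (δ (j + 1) - δ (j - 2)) * b (j - 1) + (a (j + 1) - a (j - 2)) * δ (j - 1) := by
      simp only [lorenz96, hδ, PiLp.add_apply, PiLp.sub_apply, PiLp.toLp_apply]
      ring
    rw [hval]
    nlinarith [sq_nonneg ((δ (j+1) - δ (j-2)) * b (j-1) - (a (j+1) - a (j-2)) * δ (j-1)),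
      sq_nonneg (δ (j+1) - δ (j-2)), sq_nonneg (δ (j+1) + δ (j-2)),
      sq_nonneg (a (j+1) - a (j-2)), sq_nonneg (a (j+1) + a (j-2)),
      sq_nonneg (δ (j-1)), mul_nonneg (sq_nonneg (δ (j+1) - δ (j-2))) (sub_nonneg.2 hb1),
      mul_nonneg (sub_nonneg.2 ha1) (sq_nonneg (δ (j-1))),
      mul_nonneg (sub_nonneg.2 ha2) (sq_nonneg (δ (j-1)))]
  calc ‖lorenz96 J F b - lorenz96 J F a + δ‖ ^ 2
      = ∑ j, ((lorenz96 J F b - lorenz96 J F a + δ) j) ^ 2 := euclid_norm_sq _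
    _ ≤ ∑ j, 4 * ρ ^ 2 * ((δ (j + 1)) ^ 2 + (δ (j - 2)) ^ 2 + 2 * (δ (j - 1)) ^ 2) :=
        Finset.sum_le_sum fun j _ => hcomp j
    _ = 16 * ρ ^ 2 * ‖δ‖ ^ 2 := by
        rw [euclid_norm_sq,
          show (∑ j, 4 * ρ ^ 2 * ((δ (j + 1)) ^ 2 + (δ (j - 2)) ^ 2 + 2 * (δ (j - 1)) ^ 2))
            = 4 * ρ ^ 2 * ∑ j, ((δ (j + 1)) ^ 2 + (δ (j - 2)) ^ 2 + 2 * (δ (j - 1)) ^ 2)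
            from (Finset.mul_sum _ _ _).symm,
          Finset.sum_add_distrib, Finset.sum_add_distrib, ← Finset.mul_sum,
          shift_sum_sq δ 1, shift_sum_sq' δ 2, shift_sum_sq' δ 1]
        ring

theorem lorenz96_proj_err_sq_bound (J J' : ℕ) [NeZero J]
    (hJ3 : J = 3 * J') (hJ4 : 4 ≤ J) (F : ℝ) (β : ℝ) (hβ : 0 < β)
    (u v : ℝ → EuclideanSpace ℝ (Fin J))
    (hu : ∀ t : ℝ, 0 ≤ t → HasDerivAt u (lorenz96 J F (u t)) t)
    (hv : ∀ t : ℝ, 0 ≤ t → HasDerivAt v (lorenz96 J F (v t)) t)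
    (hubd : ∀ t : ℝ, 0 ≤ t → ‖u t‖ ≤ Real.sqrt (2 * J) * |F|)
    (hvbd : ∀ t : ℝ, 0 ≤ t → ‖v t‖ ≤ Real.sqrt (2 * J) * |F|)
    (hgrow : ∀ t : ℝ, 0 ≤ t →
      ‖v t - u t‖ ^ 2 ≤ ‖v 0 - u 0‖ ^ 2 * Real.exp (2 * β * t)) :
    ∀ t : ℝ, 0 ≤ t →
      ‖lorenz96Proj J (v t - u t)‖ ^ 2
        ≤ (16 * (Real.sqrt (2 * J) * |F|) ^ 2 / β) * (Real.exp (2 * β * t) - 1)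
            * ‖v 0 - u 0‖ ^ 2
          + ‖lorenz96Proj J (v 0 - u 0)‖ ^ 2 := by
  intro t ht
  set ρ : ℝ := Real.sqrt (2 * J) * |F| with hρdef
  have hρ : 0 ≤ ρ := le_trans (norm_nonneg (u 0)) (hubd 0 le_rfl)
  set C : ℝ := 16 * ρ ^ 2 * ‖v 0 - u 0‖ ^ 2 with hCdef
  have hC : 0 ≤ C := by positivity
  -- derivative of the squared norm of the projected difference
  have hg : ∀ s : ℝ, 0 ≤ s →
      HasDerivAt (fun r => ‖lorenz96Proj J (v r - u r)‖ ^ 2)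
        (2 * (inner ℝ (lorenz96Proj J (v s - u s))
          (lorenz96Proj J (lorenz96 J F (v s) - lorenz96 J F (u s))) : ℝ)) s := by
    intro s hs
    have hδ : HasDerivAt (fun r => v r - u r)
        (lorenz96 J F (v s) - lorenz96 J F (u s)) s := (hv s hs).sub (hu s hs)
    have hP : HasDerivAt (fun r => l96P J (v r - u r))
        (l96P J (lorenz96 J F (v s) - lorenz96 J F (u s))) s :=
      (l96P J).hasFDerivAt.comp_hasDerivAt s hδ
    have h2 := hP.inner ℝ hP
    have heq : (fun r => (inner ℝ (l96P J (v r - u r)) (l96P J (v r - u r)) : ℝ))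
        = fun r => ‖lorenz96Proj J (v r - u r)‖ ^ 2 := by
      funext r
      exact real_inner_self_eq_norm_sq _
    rw [heq] at h2
    have hcm : (inner ℝ (l96P J (v s - u s)) (l96P J (lorenz96 J F (v s) - lorenz96 J F (u s))) : ℝ)
        + (inner ℝ (l96P J (lorenz96 J F (v s) - lorenz96 J F (u s))) (l96P J (v s - u s)) : ℝ)
        = 2 * (inner ℝ (l96P J (v s - u s))
            (l96P J (lorenz96 J F (v s) - lorenz96 J F (u s))) : ℝ) := by
      rw [real_inner_comm (l96P J (lorenz96 J F (v s) - lorenz96 J F (u s)))]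
      ring
    exact hcm ▸ h2
  -- bound on the derivative
  have hbd : ∀ s : ℝ, 0 ≤ s →
      2 * (inner ℝ (lorenz96Proj J (v s - u s))
        (lorenz96Proj J (lorenz96 J F (v s) - lorenz96 J F (u s))) : ℝ)
        ≤ C * Real.exp (2 * β * s) := by
    intro s hs
    set x : EuclideanSpace ℝ (Fin J) := lorenz96Proj J (v s - u s) with hx
    set N : EuclideanSpace ℝ (Fin J) :=
      lorenz96 J F (v s) - lorenz96 J F (u s) + (v s - u s) with hN
    have hPD : lorenz96Proj J (lorenz96 J F (v s) - lorenz96 J F (u s))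
        = lorenz96Proj J N - x := by
      have : lorenz96 J F (v s) - lorenz96 J F (u s) = N - (v s - u s) := by
        rw [hN]; abel
      rw [this, hx, show lorenz96Proj J (N - (v s - u s))
          = l96P J (N - (v s - u s)) from rfl, map_sub]
      rfl
    rw [hPD, inner_sub_right, real_inner_self_eq_norm_sq]
    have h2 : (inner ℝ x (lorenz96Proj J N) : ℝ) ≤ ‖x‖ * ‖lorenz96Proj J N‖ :=
      real_inner_le_norm _ _
    have h3 : ‖lorenz96Proj J N‖ ^ 2 ≤ ‖N‖ ^ 2 := proj_norm_le N
    have h4 : ‖N‖ ^ 2 ≤ 16 * ρ ^ 2 * ‖v s - u s‖ ^ 2 :=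
      key_est F ρ (u s) (v s) (hubd s hs) (hvbd s hs)
    have h5 : ‖v s - u s‖ ^ 2 ≤ ‖v 0 - u 0‖ ^ 2 * Real.exp (2 * β * s) := hgrow s hs
    have h6 : 16 * ρ ^ 2 * ‖v s - u s‖ ^ 2
        ≤ 16 * ρ ^ 2 * (‖v 0 - u 0‖ ^ 2 * Real.exp (2 * β * s)) :=
      mul_le_mul_of_nonneg_left h5 (by positivity)
    have h7 : C * Real.exp (2 * β * s)
        = 16 * ρ ^ 2 * (‖v 0 - u 0‖ ^ 2 * Real.exp (2 * β * s)) := by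
      rw [hCdef]; ring
    nlinarith [sq_nonneg (‖x‖ - ‖lorenz96Proj J N‖), norm_nonneg x,
      norm_nonneg (lorenz96Proj J N)]
  -- the auxiliary monotone function
  set φ : ℝ → ℝ := fun r =>
    C / (2 * β) * Real.exp (2 * β * r) - ‖lorenz96Proj J (v r - u r)‖ ^ 2 with hφdef
  have hφd : ∀ s : ℝ, 0 ≤ s → HasDerivAt φ
      (C / (2 * β) * (Real.exp (2 * β * s) * (2 * β))
        - 2 * (inner ℝ (lorenz96Proj J (v s - u s))
          (lorenz96Proj J (lorenz96 J F (v s) - lorenz96 J F (u s))) : ℝ)) s := by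
    intro s hs
    have he : HasDerivAt (fun r : ℝ => Real.exp (2 * β * r))
        (Real.exp (2 * β * s) * (2 * β)) s := by
      have h1 : HasDerivAt (fun r : ℝ => 2 * β * r) (2 * β) s := by
        simpa using (hasDerivAt_id s).const_mul (2 * β)
      exact h1.exp
    exact (he.const_mul (C / (2 * β))).sub (hg s hs)
  have hmono : MonotoneOn φ (Set.Ici (0 : ℝ)) := by
    apply monotoneOn_of_deriv_nonneg (convex_Ici 0)
    · intro s hs
      exact ((hφd s hs).continuousAt).continuousWithinAt
    · intro s hs
      rw [interior_Ici] at hs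
      exact (hφd s (le_of_lt hs)).differentiableAt.differentiableWithinAt
    · intro s hs
      rw [interior_Ici] at hs
      rw [(hφd s (le_of_lt hs)).deriv]
      have hb := hbd s (le_of_lt hs)
      have : C / (2 * β) * (Real.exp (2 * β * s) * (2 * β)) = C * Real.exp (2 * β * s) := by
        field_simp
      linarith [this ▸ hb]
  have key := hmono (Set.self_mem_Ici) (Set.mem_Ici.2 ht) ht
  simp only [hφdef, mul_zero, Real.exp_zero, mul_one] at key
  -- conclude
  have hE1 : (1 : ℝ) ≤ Real.exp (2 * β * t) := Real.one_le_exp (by positivity)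
  have hsplit : C / (2 * β) * (Real.exp (2 * β * t) - 1)
      ≤ 16 * ρ ^ 2 / β * (Real.exp (2 * β * t) - 1) * ‖v 0 - u 0‖ ^ 2 := by
    have h1 : C / (2 * β) ≤ C / β :=
      div_le_div_of_nonneg_left hC hβ (by linarith)
    have h2 : C / (2 * β) * (Real.exp (2 * β * t) - 1)
        ≤ C / β * (Real.exp (2 * β * t) - 1) :=
      mul_le_mul_of_nonneg_right h1 (by linarith)
    have h3 : C / β * (Real.exp (2 * β * t) - 1)
        = 16 * ρ ^ 2 / β * (Real.exp (2 * β * t) - 1) * ‖v 0 - u 0‖ ^ 2 := by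
      rw [hCdef]; ring
    linarith [h3 ▸ h2]
  linarith
end

section
/- Let u, v : [0,∞) → ℝ^J be two solutions of the Lorenz 96 equation with ‖u(t)‖ ≤ ρ and ‖v(t)‖ ≤ ρ for all t ≥ 0, where ρ = √(2J)·|F|, let δ(t) = v(t) − u(t), assume β > 0 is such that ‖δ(t)‖² ≤ ‖δ(0)‖²·e^{2βt} for all t ≥ 0, and assume c > 0 is such that ⟨2B(a,b) + B(b,b), b⟩ ≤ c·‖a‖·‖b‖·‖Πb‖ for all a, b ∈ ℝ^J. Then for all t ≥ 0, ‖δ(t)‖² ≤ b₁(t)·‖δ(0)‖² + b₂(t)·‖Πδ(0)‖², where b₁(t) = (16c²ρ⁴/β)·[ (1/(2β+1))·(e^{2βt} − e^{−t}) − (1 − e^{−t}) ] + e^{−t} and b₂(t) = c²ρ²·(1 − e^{−t}). -/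
/-- The symmetric bilinear map of the Lorenz 96 model, with coordinates
indexed cyclically modulo `J`. -/
noncomputable def lorenz96B (J : ℕ) [NeZero J]
    (u v : EuclideanSpace ℝ (Fin J)) : EuclideanSpace ℝ (Fin J) :=
  WithLp.toLp 2 (fun j => (1 / 2) * (v (j - 1) * u (j + 1) + u (j - 1) * v (j + 1)
    - v (j - 2) * u (j - 1) - u (j - 2) * v (j - 1)))

open scoped RealInnerProductSpace

variable {J : ℕ} [NeZero J]

set_option linter.unusedSectionVars false

lemma lz_norm_sq (x : EuclideanSpace ℝ (Fin J)) : ‖x‖ ^ 2 = ∑ j, (x j) ^ 2 := by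
  rw [PiLp.norm_sq_eq_of_L2]
  simp [Real.norm_eq_abs, sq_abs]

lemma lz_coord_sq_le (x : EuclideanSpace ℝ (Fin J)) (i : Fin J) : (x i) ^ 2 ≤ ‖x‖ ^ 2 := by
  rw [lz_norm_sq]
  exact Finset.single_le_sum (f := fun j => (x j) ^ 2) (fun j _ => sq_nonneg _) (Finset.mem_univ i)

lemma lz_sum_shift (b : EuclideanSpace ℝ (Fin J)) (c : Fin J) :
    ∑ j, (b (j - c)) ^ 2 = ‖b‖ ^ 2 := by
  rw [lz_norm_sq]
  exact Fintype.sum_equiv (Equiv.subRight c) _ _ (fun j => rfl)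

lemma lz_sum_shift' (b : EuclideanSpace ℝ (Fin J)) (c : Fin J) :
    ∑ j, (b (j + c)) ^ 2 = ‖b‖ ^ 2 := by
  rw [lz_norm_sq]
  exact Fintype.sum_equiv (Equiv.addRight c) _ _ (fun j => rfl)

lemma lz_B_norm (a b : EuclideanSpace ℝ (Fin J)) :
    ‖lorenz96B J a b‖ ≤ 2 * ‖a‖ * ‖b‖ := by
  have h2 : ‖lorenz96B J a b‖ ^ 2 ≤ (2 * ‖a‖ * ‖b‖) ^ 2 := by
    rw [lz_norm_sq]
    have key : ∀ j : Fin J, (lorenz96B J a b j) ^ 2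
        ≤ ‖a‖ ^ 2 * (2 * (b (j - 1)) ^ 2 + (b (j + 1)) ^ 2 + (b (j - 2)) ^ 2) := by
      intro j
      have h1 := lz_coord_sq_le a (j + 1)
      have h2 := lz_coord_sq_le a (j - 1)
      have h3 := lz_coord_sq_le a (j - 2)
      simp only [lorenz96B, PiLp.toLp_apply]
      nlinarith [sq_nonneg (b (j-1) * a (j+1) - a (j-1) * b (j+1)),
        sq_nonneg (b (j-1) * a (j+1) + b (j-2) * a (j-1)),
        sq_nonneg (b (j-1) * a (j+1) + a (j-2) * b (j-1)),
        sq_nonneg (a (j-1) * b (j+1) + b (j-2) * a (j-1)),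
        sq_nonneg (a (j-1) * b (j+1) + a (j-2) * b (j-1)),
        sq_nonneg (b (j-2) * a (j-1) - a (j-2) * b (j-1)),
        sq_nonneg (b (j-1)), sq_nonneg (b (j+1)), sq_nonneg (b (j-2)),
        sq_nonneg (‖a‖)]
    calc ∑ j, (lorenz96B J a b j) ^ 2
        ≤ ∑ j, ‖a‖ ^ 2 * (2 * (b (j - 1)) ^ 2 + (b (j + 1)) ^ 2 + (b (j - 2)) ^ 2) :=
          Finset.sum_le_sum (fun j _ => key j)
      _ = (2 * ‖a‖ * ‖b‖) ^ 2 := by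
          rw [← Finset.mul_sum]
          simp only [Finset.sum_add_distrib, ← Finset.mul_sum]
          rw [lz_sum_shift b 1, lz_sum_shift' b 1, lz_sum_shift b 2]
          ring
  have hn : (0:ℝ) ≤ 2 * ‖a‖ * ‖b‖ := by positivity
  nlinarith [norm_nonneg (lorenz96B J a b)]

set_option linter.unusedSectionVars false

lemma lz_proj_inner (x y : EuclideanSpace ℝ (Fin J)) :
    ⟪x, lorenz96Proj J y⟫ = ⟪lorenz96Proj J x, lorenz96Proj J y⟫ := by
  simp only [PiLp.inner_apply, RCLike.inner_apply, conj_trivial]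
  refine Finset.sum_congr rfl (fun j _ => ?_)
  simp only [lorenz96Proj, PiLp.toLp_apply]
  split_ifs <;> simp

lemma lz_proj_norm_le (x : EuclideanSpace ℝ (Fin J)) : ‖lorenz96Proj J x‖ ≤ ‖x‖ := by
  have h2 : ‖lorenz96Proj J x‖ ^ 2 ≤ ‖x‖ ^ 2 := by
    rw [lz_norm_sq, lz_norm_sq]
    refine Finset.sum_le_sum (fun j _ => ?_)
    simp only [lorenz96Proj, PiLp.toLp_apply]
    split_ifs <;> simp [sq_nonneg]
  nlinarith [norm_nonneg (lorenz96Proj J x), norm_nonneg x]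

noncomputable def lorenz96ProjCLM (J : ℕ) [NeZero J] :
    EuclideanSpace ℝ (Fin J) →L[ℝ] EuclideanSpace ℝ (Fin J) :=
  LinearMap.toContinuousLinearMap
    { toFun := lorenz96Proj J
      map_add' := by
        intro x y; ext j
        simp only [lorenz96Proj, PiLp.add_apply, PiLp.toLp_apply]
        split_ifs <;> simp
      map_smul' := by
        intro r x; ext j
        simp only [lorenz96Proj, PiLp.smul_apply, PiLp.toLp_apply, RingHom.id_apply, smul_eq_mul]
        split_ifs <;> simp }

lemma lz_projCLM_apply (x : EuclideanSpace ℝ (Fin J)) :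
    lorenz96ProjCLM J x = lorenz96Proj J x := rfl

lemma lz_sub_eq (F : ℝ) (a b : EuclideanSpace ℝ (Fin J)) :
    lorenz96 J F b - lorenz96 J F a
      = 2 • lorenz96B J a (b - a) + lorenz96B J (b - a) (b - a) - (b - a) := by
  ext j
  simp only [lorenz96, lorenz96B, PiLp.toLp_apply, PiLp.sub_apply, PiLp.add_apply, PiLp.smul_apply,
    two_smul, smul_eq_mul]
  ring

lemma lz_hasDerivAt_norm_sq {E : Type*} [NormedAddCommGroup E] [InnerProductSpace ℝ E]
    {f : ℝ → E} {f' : E} {t : ℝ} (hf : HasDerivAt f f' t) :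
    HasDerivAt (fun s => ‖f s‖ ^ 2) (2 * ⟪f', f t⟫) t := by
  have h := hf.inner ℝ hf
  have h2 : (fun s => ⟪f s, f s⟫) = fun s => ‖f s‖ ^ 2 :=
    funext fun s => real_inner_self_eq_norm_sq _
  rw [h2] at h
  have e : ⟪f t, f'⟫ + ⟪f', f t⟫ = 2 * ⟪f', f t⟫ := by rw [real_inner_comm (f t)]; ring
  rw [e] at h; exact h

lemma lz_le_of_deriv_le {f g f' g' : ℝ → ℝ}
    (hf : ∀ t, 0 ≤ t → HasDerivAt f (f' t) t)
    (hg : ∀ t, 0 ≤ t → HasDerivAt g (g' t) t)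
    (h0 : f 0 ≤ g 0) (hle : ∀ t, 0 < t → f' t ≤ g' t) :
    ∀ t, 0 ≤ t → f t ≤ g t := by
  intro t ht
  have hmono : MonotoneOn (fun s => g s - f s) (Set.Ici 0) := by
    apply monotoneOn_of_deriv_nonneg (convex_Ici 0)
    · intro s hs
      exact ((hg s hs).sub (hf s hs)).continuousAt.continuousWithinAt
    · intro s hs
      rw [interior_Ici] at hs
      exact ((hg s hs.le).sub (hf s hs.le)).differentiableAt.differentiableWithinAt
    · intro s hs
      rw [interior_Ici] at hs
      have hd : deriv (fun s => g s - f s) s = g' s - f' s := ((hg s hs.le).sub (hf s hs.le)).deriv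
      rw [hd]
      linarith [hle s hs]
  have := hmono Set.self_mem_Ici (Set.mem_Ici.2 ht) ht
  simp only at this
  linarith


set_option maxHeartbeats 2000000 in
theorem lorenz96_err_sq_bound (J J' : ℕ) [NeZero J]
    (hJ3 : J = 3 * J') (hJ4 : 4 ≤ J) (F : ℝ) (β : ℝ) (hβ : 0 < β)
    (c : ℝ) (hc : 0 < c)
    (hB : ∀ a b : EuclideanSpace ℝ (Fin J),
      inner (𝕜 := ℝ) (2 • lorenz96B J a b + lorenz96B J b b) b
        ≤ c * ‖a‖ * ‖b‖ * ‖lorenz96Proj J b‖)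
    (u v : ℝ → EuclideanSpace ℝ (Fin J))
    (hu : ∀ t : ℝ, 0 ≤ t → HasDerivAt u (lorenz96 J F (u t)) t)
    (hv : ∀ t : ℝ, 0 ≤ t → HasDerivAt v (lorenz96 J F (v t)) t)
    (hubd : ∀ t : ℝ, 0 ≤ t → ‖u t‖ ≤ Real.sqrt (2 * J) * |F|)
    (hvbd : ∀ t : ℝ, 0 ≤ t → ‖v t‖ ≤ Real.sqrt (2 * J) * |F|)
    (hgrow : ∀ t : ℝ, 0 ≤ t →
      ‖v t - u t‖ ^ 2 ≤ ‖v 0 - u 0‖ ^ 2 * Real.exp (2 * β * t)) :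
    ∀ t : ℝ, 0 ≤ t →
      ‖v t - u t‖ ^ 2
        ≤ ((16 * c ^ 2 * (Real.sqrt (2 * J) * |F|) ^ 4 / β)
              * ((1 / (2 * β + 1)) * (Real.exp (2 * β * t) - Real.exp (-t))
                  - (1 - Real.exp (-t)))
            + Real.exp (-t)) * ‖v 0 - u 0‖ ^ 2
          + (c ^ 2 * (Real.sqrt (2 * J) * |F|) ^ 2 * (1 - Real.exp (-t)))
            * ‖lorenz96Proj J (v 0 - u 0)‖ ^ 2 := by
  intro t ht
  set ρ := Real.sqrt (2 * (J:ℝ)) * |F| with hρdef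
  have hρ0 : 0 ≤ ρ := by rw [hρdef]; positivity
  have hβ1 : (0:ℝ) < 2 * β + 1 := by linarith
  -- derivative of the difference
  have hδd : ∀ s : ℝ, 0 ≤ s → HasDerivAt (fun r => v r - u r)
      (2 • lorenz96B J (u s) (v s - u s) + lorenz96B J (v s - u s) (v s - u s)
        - (v s - u s)) s := by
    intro s hs
    have h := (hv s hs).sub (hu s hs)
    rwa [lz_sub_eq] at h
  have hδbd : ∀ s : ℝ, 0 ≤ s → ‖v s - u s‖ ≤ 2 * ρ := by
    intro s hs
    have h := norm_sub_le (v s) (u s)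
    have h1 := hubd s hs
    have h2 := hvbd s hs
    linarith
  have hWbd : ∀ s : ℝ, 0 ≤ s →
      ‖2 • lorenz96B J (u s) (v s - u s) + lorenz96B J (v s - u s) (v s - u s)‖
        ≤ 8 * ρ * ‖v s - u s‖ := by
    intro s hs
    have h1 := lz_B_norm (u s) (v s - u s)
    have h2 := lz_B_norm (v s - u s) (v s - u s)
    have h3 := norm_add_le (2 • lorenz96B J (u s) (v s - u s))
      (lorenz96B J (v s - u s) (v s - u s))
    have h4 : ‖(2:ℕ) • lorenz96B J (u s) (v s - u s)‖
        ≤ 2 * ‖lorenz96B J (u s) (v s - u s)‖ := by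
      rw [two_smul]
      calc ‖lorenz96B J (u s) (v s - u s) + lorenz96B J (u s) (v s - u s)‖
          ≤ ‖lorenz96B J (u s) (v s - u s)‖ + ‖lorenz96B J (u s) (v s - u s)‖ :=
            norm_add_le _ _
        _ = 2 * ‖lorenz96B J (u s) (v s - u s)‖ := by ring
    have h5 := hubd s hs
    have h6 := hδbd s hs
    have hn1 : (0:ℝ) ≤ ‖v s - u s‖ := norm_nonneg _
    have hn2 : (0:ℝ) ≤ ‖u s‖ := norm_nonneg _
    nlinarith
  -- Step A : bound on the projected error
  have hqA : ∀ s : ℝ, 0 ≤ s →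
      ‖lorenz96Proj J (v s - u s)‖ ^ 2
        ≤ ‖lorenz96Proj J (v 0 - u 0)‖ ^ 2
          + 16 * ρ ^ 2 / β * (Real.exp (2 * β * s) - 1) * ‖v 0 - u 0‖ ^ 2 := by
    refine lz_le_of_deriv_le
      (f' := fun s => 2 * ⟪lorenz96ProjCLM J
          (2 • lorenz96B J (u s) (v s - u s) + lorenz96B J (v s - u s) (v s - u s)
            - (v s - u s)), lorenz96ProjCLM J (v s - u s)⟫)
      (g' := fun s => 32 * ρ ^ 2 * Real.exp (2 * β * s) * ‖v 0 - u 0‖ ^ 2)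
      ?_ ?_ ?_ ?_
    · intro s hs
      have hPd := (lorenz96ProjCLM J).hasFDerivAt.comp_hasDerivAt s (hδd s hs)
      exact lz_hasDerivAt_norm_sq hPd
    · intro s hs
      have he : HasDerivAt (fun r : ℝ => Real.exp (2 * β * r))
          (Real.exp (2 * β * s) * (2 * β)) s := by
        simpa using ((hasDerivAt_id s).const_mul (2 * β)).exp
      have h := (((he.sub_const 1).const_mul (16 * ρ ^ 2 / β)).mul_const
        (‖v 0 - u 0‖ ^ 2)).const_add (‖lorenz96Proj J (v 0 - u 0)‖ ^ 2)
      convert h using 1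
      case e'_4 => rfl
      case e'_5 => rfl
      field_simp
      try ring
    · simp
    · intro s hs
      have hs0 : (0:ℝ) ≤ s := hs.le
      set W := 2 • lorenz96B J (u s) (v s - u s) + lorenz96B J (v s - u s) (v s - u s)
        with hWdef
      have hmap : lorenz96ProjCLM J (W - (v s - u s))
          = lorenz96ProjCLM J W - lorenz96ProjCLM J (v s - u s) := map_sub _ _ _
      rw [hmap, inner_sub_left]
      have hiW : ⟪lorenz96ProjCLM J W, lorenz96ProjCLM J (v s - u s)⟫
          = ⟪W, lorenz96Proj J (v s - u s)⟫ := (lz_proj_inner W (v s - u s)).symm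
      have hiP : ⟪lorenz96ProjCLM J (v s - u s), lorenz96ProjCLM J (v s - u s)⟫
          = ‖lorenz96Proj J (v s - u s)‖ ^ 2 := real_inner_self_eq_norm_sq _
      rw [hiW, hiP]
      have hcs := real_inner_le_norm W (lorenz96Proj J (v s - u s))
      have hWb := hWbd s hs0
      have hpb := lz_proj_norm_le (v s - u s)
      have hgr := hgrow s hs0
      have hn1 : (0:ℝ) ≤ ‖v s - u s‖ := norm_nonneg _
      have hn2 : (0:ℝ) ≤ ‖lorenz96Proj J (v s - u s)‖ := norm_nonneg _
      have hn3 : (0:ℝ) ≤ ‖W‖ := norm_nonneg _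
      have hW2 : ‖W‖ ^ 2 ≤ 64 * ρ ^ 2 * ‖v s - u s‖ ^ 2 := by nlinarith
      have h5 : 2 * ‖W‖ * ‖lorenz96Proj J (v s - u s)‖
          - 2 * ‖lorenz96Proj J (v s - u s)‖ ^ 2 ≤ ‖W‖ ^ 2 / 2 := by
        nlinarith [sq_nonneg (‖W‖ - 2 * ‖lorenz96Proj J (v s - u s)‖)]
      have h6 : (0:ℝ) ≤ 32 * ρ ^ 2 := by positivity
      linarith [mul_le_mul_of_nonneg_left hgr h6]
  -- Step B : main Gronwall estimate
  have hBmain : ∀ s : ℝ, 0 ≤ s →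
      Real.exp s * ‖v s - u s‖ ^ 2
        ≤ ‖v 0 - u 0‖ ^ 2
          + c ^ 2 * ρ ^ 2 * (Real.exp s - 1) * ‖lorenz96Proj J (v 0 - u 0)‖ ^ 2
          + 16 * c ^ 2 * ρ ^ 4 / β
            * ((Real.exp ((2 * β + 1) * s) - 1) / (2 * β + 1) - (Real.exp s - 1))
            * ‖v 0 - u 0‖ ^ 2 := by
    refine lz_le_of_deriv_le
      (f' := fun s => Real.exp s * ‖v s - u s‖ ^ 2
        + Real.exp s * (2 * ⟪2 • lorenz96B J (u s) (v s - u s)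
            + lorenz96B J (v s - u s) (v s - u s) - (v s - u s), v s - u s⟫))
      (g' := fun s => c ^ 2 * ρ ^ 2 * Real.exp s * ‖lorenz96Proj J (v 0 - u 0)‖ ^ 2
        + 16 * c ^ 2 * ρ ^ 4 / β * (Real.exp ((2 * β + 1) * s) - Real.exp s)
          * ‖v 0 - u 0‖ ^ 2)
      ?_ ?_ ?_ ?_
    · intro s hs
      have hp := lz_hasDerivAt_norm_sq (hδd s hs)
      exact (Real.hasDerivAt_exp s).mul hp
    · intro s hs
      have he2 : HasDerivAt (fun r : ℝ => Real.exp ((2 * β + 1) * r))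
          (Real.exp ((2 * β + 1) * s) * (2 * β + 1)) s := by
        simpa using ((hasDerivAt_id s).const_mul (2 * β + 1)).exp
      have he1 := Real.hasDerivAt_exp s
      have h := ((((he1.sub_const 1).const_mul (c ^ 2 * ρ ^ 2)).mul_const
          (‖lorenz96Proj J (v 0 - u 0)‖ ^ 2)).const_add (‖v 0 - u 0‖ ^ 2)).add
        ((((he2.sub_const 1).div_const (2 * β + 1)).sub (he1.sub_const 1)).const_mul
            (16 * c ^ 2 * ρ ^ 4 / β) |>.mul_const (‖v 0 - u 0‖ ^ 2))
      convert h using 1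
      case e'_4 => rfl
      case e'_5 => rfl
      case e'_8 => rfl
      field_simp
      try ring
    · simp
    · intro s hs
      have hs0 : (0:ℝ) ≤ s := hs.le
      set W := 2 • lorenz96B J (u s) (v s - u s) + lorenz96B J (v s - u s) (v s - u s)
        with hWdef
      have key : ‖v s - u s‖ ^ 2 + 2 * ⟪W - (v s - u s), v s - u s⟫
          ≤ c ^ 2 * ρ ^ 2 * (‖lorenz96Proj J (v 0 - u 0)‖ ^ 2
              + 16 * ρ ^ 2 / β * (Real.exp (2 * β * s) - 1) * ‖v 0 - u 0‖ ^ 2) := by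
        rw [inner_sub_left]
        have hs2 : ⟪(v s - u s : EuclideanSpace ℝ (Fin J)), v s - u s⟫
            = ‖v s - u s‖ ^ 2 := real_inner_self_eq_norm_sq _
        rw [hs2]
        have hBs := hB (u s) (v s - u s)
        rw [← hWdef] at hBs
        have hub := hubd s hs0
        have hpb := lz_proj_norm_le (v s - u s)
        have hn1 : (0:ℝ) ≤ ‖v s - u s‖ := norm_nonneg _
        have hn2 : (0:ℝ) ≤ ‖lorenz96Proj J (v s - u s)‖ := norm_nonneg _
        have hc2 : c * ‖u s‖ * ‖v s - u s‖ * ‖lorenz96Proj J (v s - u s)‖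
            ≤ c * ρ * ‖v s - u s‖ * ‖lorenz96Proj J (v s - u s)‖ := by
          exact mul_le_mul_of_nonneg_right (mul_le_mul_of_nonneg_right
            (mul_le_mul_of_nonneg_left hub hc.le) hn1) hn2
        have hyoung : 2 * (c * ρ * ‖v s - u s‖ * ‖lorenz96Proj J (v s - u s)‖)
            - ‖v s - u s‖ ^ 2 ≤ c ^ 2 * ρ ^ 2 * ‖lorenz96Proj J (v s - u s)‖ ^ 2 := by
          nlinarith [sq_nonneg (c * ρ * ‖lorenz96Proj J (v s - u s)‖ - ‖v s - u s‖)]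
        have hqAs := hqA s hs0
        have hcρ : (0:ℝ) ≤ c ^ 2 * ρ ^ 2 := by positivity
        linarith [mul_le_mul_of_nonneg_left hqAs hcρ]
      have hexp : Real.exp ((2 * β + 1) * s) = Real.exp s * Real.exp (2 * β * s) := by
        rw [show (2 * β + 1) * s = s + 2 * β * s by ring, Real.exp_add]
      calc Real.exp s * ‖v s - u s‖ ^ 2
            + Real.exp s * (2 * ⟪W - (v s - u s), v s - u s⟫)
          = Real.exp s * (‖v s - u s‖ ^ 2 + 2 * ⟪W - (v s - u s), v s - u s⟫) := by ring
        _ ≤ Real.exp s * (c ^ 2 * ρ ^ 2 * (‖lorenz96Proj J (v 0 - u 0)‖ ^ 2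
              + 16 * ρ ^ 2 / β * (Real.exp (2 * β * s) - 1) * ‖v 0 - u 0‖ ^ 2)) :=
            mul_le_mul_of_nonneg_left key (Real.exp_pos s).le
        _ = c ^ 2 * ρ ^ 2 * Real.exp s * ‖lorenz96Proj J (v 0 - u 0)‖ ^ 2
            + 16 * c ^ 2 * ρ ^ 4 / β * (Real.exp ((2 * β + 1) * s) - Real.exp s)
              * ‖v 0 - u 0‖ ^ 2 := by
            rw [hexp]; field_simp
  -- conclusion
  have hfB := hBmain t ht
  have hexp1 : Real.exp (-t) = (Real.exp t)⁻¹ := Real.exp_neg t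
  have hexp2 : Real.exp ((2 * β + 1) * t) = Real.exp t * Real.exp (2 * β * t) := by
    rw [show (2 * β + 1) * t = t + 2 * β * t by ring, Real.exp_add]
  have hept : (0:ℝ) < Real.exp t := Real.exp_pos t
  rw [hexp2] at hfB
  have hmain := mul_le_mul_of_nonneg_left hfB (inv_nonneg.2 hept.le)
  rw [← mul_assoc, inv_mul_cancel₀ hept.ne', one_mul] at hmain
  refine hmain.trans (le_of_eq ?_)
  rw [hexp1]
  field_simp
  ring
end
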